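/- Let H be a Hopf algebra over a field k. For all a, b, c in H, the right adjoint action a ◁ b := S(b_{(1)}) a b_{(2)} satisfies the self-distributivity identity (a ◁ b) ◁ c = (a ◁ c_{(1)}) ◁ (b ◁ c_{(2)}). -/

import Mathlib

open TensorProduct

set_option maxHeartbeats 1000000
set_option synthInstance.maxHeartbeats 400000
set_option linter.unusedSectionVars false

variable (k : Type) [Field k]

/-- The right adjoint action `a ⊗ b ↦ S(b₁) a b₂` of a Hopf algebra on itself,
as a linear map `H ⊗ H →ₗ H`. -/
noncomputable def adAct (H : Type) [Ring H] [HopfAlgebra k H] :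
    H ⊗[k] H →ₗ[k] H :=
  LinearMap.mul' k H ∘ₗ
    TensorProduct.map
      (LinearMap.mul' k H ∘ₗ
        TensorProduct.map (HopfAlgebra.antipode (R := k)) LinearMap.id ∘ₗ
        (TensorProduct.comm k H H).toLinearMap)
      LinearMap.id ∘ₗ
    (TensorProduct.assoc k H H H).symm.toLinearMap ∘ₗ
    TensorProduct.map LinearMap.id (Coalgebra.comul (R := k) (A := H))

namespace SelfDistribAux

open Coalgebra HopfAlgebra

variable {k} {H : Type} [Ring H] [HopfAlgebra k H]

lemma adAct_tmul {ι : Type*} (a b : H) (r : Repr k b ι) :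
    adAct k H (a ⊗ₜ[k] b) =
      ∑ i ∈ r.index, antipode (R := k) (r.left i) * a * r.right i := by
  simp [adAct, ← r.eq, tmul_sum, map_sum, mul_assoc]

/-- A representation of `comul (x * y)` built from representations of `x` and `y`. -/
noncomputable def Repr.mul {x y : H} {ιx ιy : Type*} (rx : Repr k x ιx) (ry : Repr k y ιy) :
    Repr k (x * y) (ιx × ιy) where
  index := rx.index ×ˢ ry.index
  left := fun p => rx.left p.1 * ry.left p.2
  right := fun p => rx.right p.1 * ry.right p.2
  eq := by
    rw [Finset.sum_product, Bialgebra.comul_mul, ← rx.eq, ← ry.eq, Finset.sum_mul_sum]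
    simp [Algebra.TensorProduct.tmul_mul_tmul]

/-- Convolution product on linear maps from a coalgebra to an algebra. -/
noncomputable def conv {C : Type} [AddCommMonoid C] [Module k C] [Coalgebra k C]
    (f g : C →ₗ[k] H) : C →ₗ[k] H :=
  LinearMap.mul' k H ∘ₗ TensorProduct.map f g ∘ₗ Coalgebra.comul (R := k)

lemma conv_repr {C : Type} [AddCommMonoid C] [Module k C] [Coalgebra k C]
    (f g : C →ₗ[k] H) (c : C) {ι : Type*} (r : Repr k c ι) :
    conv f g c = ∑ i ∈ r.index, f (r.left i) * g (r.right i) := by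
  simp [conv, ← r.eq, map_sum]

/-- The convolution unit. -/
noncomputable def cunit {C : Type} [AddCommMonoid C] [Module k C] [Coalgebra k C] :
    C →ₗ[k] H :=
  Algebra.linearMap k H ∘ₗ Coalgebra.counit (R := k)

lemma counit_smul_sum {C : Type} [AddCommMonoid C] [Module k C] [Coalgebra k C]
    {c : C} {ι : Type*} (r : Repr k c ι) :
    ∑ i ∈ r.index, counit (R := k) (r.left i) • r.right i = c := by
  have h := congrArg (TensorProduct.lid k C) (sum_counit_tmul_eq r)
  simp only [map_sum, TensorProduct.lid_tmul, one_smul] at h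
  exact h

lemma smul_counit_sum {C : Type} [AddCommMonoid C] [Module k C] [Coalgebra k C]
    {c : C} {ι : Type*} (r : Repr k c ι) :
    ∑ i ∈ r.index, counit (R := k) (r.right i) • r.left i = c := by
  have h := congrArg (TensorProduct.rid k C) (sum_tmul_counit_eq r)
  simp only [map_sum, TensorProduct.rid_tmul, one_smul] at h
  exact h

lemma conv_cunit_left {C : Type} [AddCommMonoid C] [Module k C] [Coalgebra k C]
    (f : C →ₗ[k] H) : conv cunit f = f := by
  ext c
  rw [conv_repr _ _ c (ℛ k c)]
  simp only [cunit, LinearMap.comp_apply, Algebra.linearMap_apply]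
  calc ∑ i ∈ (ℛ k c).index,
        algebraMap k H (counit (R := k) ((ℛ k c).left i)) * f ((ℛ k c).right i)
      = ∑ i ∈ (ℛ k c).index, counit (R := k) ((ℛ k c).left i) • f ((ℛ k c).right i) := by
        simp [Algebra.smul_def]
    _ = f (∑ i ∈ (ℛ k c).index, counit (R := k) ((ℛ k c).left i) • ((ℛ k c).right i)) := by
        simp [map_sum]
    _ = f c := by rw [counit_smul_sum]

lemma conv_cunit_right {C : Type} [AddCommMonoid C] [Module k C] [Coalgebra k C]
    (f : C →ₗ[k] H) : conv f cunit = f := by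
  ext c
  rw [conv_repr _ _ c (ℛ k c)]
  simp only [cunit, LinearMap.comp_apply, Algebra.linearMap_apply]
  calc ∑ i ∈ (ℛ k c).index,
        f ((ℛ k c).left i) * algebraMap k H (counit (R := k) ((ℛ k c).right i))
      = ∑ i ∈ (ℛ k c).index, counit (R := k) ((ℛ k c).right i) • f ((ℛ k c).left i) := by
        simp [Algebra.commutes, Algebra.smul_def]
    _ = f (∑ i ∈ (ℛ k c).index, counit (R := k) ((ℛ k c).right i) • ((ℛ k c).left i)) := by
        simp [map_sum]
    _ = f c := by rw [smul_counit_sum]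

lemma conv_assoc {C : Type} [AddCommMonoid C] [Module k C] [Coalgebra k C]
    (f g h : C →ₗ[k] H) : conv (conv f g) h = conv f (conv g h) := by
  ext c
  set r := ℛ k c
  have key := sum_map_tmul_tmul_eq (R := k) f g h c (repr := r)
    (a₁ := fun i => ℛ k (r.left i)) (a₂ := fun i => ℛ k (r.right i))
  have key2 := congrArg (LinearMap.mul' k H ∘ₗ
    TensorProduct.map LinearMap.id (LinearMap.mul' k H)) key
  simp only [map_sum, LinearMap.comp_apply, TensorProduct.map_tmul, LinearMap.id_coe, id_eq,
    LinearMap.mul'_apply] at key2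
  rw [conv_repr _ _ c r, conv_repr _ _ c r]
  have h1 : ∀ i ∈ r.index, conv f g (r.left i) * h (r.right i)
      = ∑ j ∈ (ℛ k (r.left i)).index,
          f ((ℛ k (r.left i)).left j) * g ((ℛ k (r.left i)).right j) * h (r.right i) := by
    intro i _
    rw [conv_repr _ _ _ (ℛ k (r.left i)), Finset.sum_mul]
  have h2 : ∀ i ∈ r.index, f (r.left i) * conv g h (r.right i)
      = ∑ j ∈ (ℛ k (r.right i)).index,
          f (r.left i) * (g ((ℛ k (r.right i)).left j) * h ((ℛ k (r.right i)).right j)) := by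
    intro i _
    rw [conv_repr _ _ _ (ℛ k (r.right i)), Finset.mul_sum]
  rw [Finset.sum_congr rfl h1, Finset.sum_congr rfl h2]
  simp only [mul_assoc]
  exact key2.symm

/-- A representation of `comul (x ⊗ₜ y)` in the tensor product coalgebra. -/
noncomputable def Repr.tmul {x y : H} {ιx ιy : Type*} (rx : Repr k x ιx) (ry : Repr k y ιy) :
    Repr k (x ⊗ₜ[k] y : H ⊗[k] H) (ιx × ιy) where
  index := rx.index ×ˢ ry.index
  left := fun p => rx.left p.1 ⊗ₜ[k] ry.left p.2
  right := fun p => rx.right p.1 ⊗ₜ[k] ry.right p.2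
  eq := by
    rw [Finset.sum_product]
    show _ = CoalgebraStruct.comul (R := k) (x ⊗ₜ[k] y)
    rw [TensorProduct.comul_def]
    rw [LinearMap.comp_apply, TensorProduct.AlgebraTensorModule.map_tmul, ← rx.eq, ← ry.eq]
    rw [TensorProduct.sum_tmul]
    rw [map_sum]
    refine Finset.sum_congr rfl fun i _ => ?_
    rw [TensorProduct.tmul_sum, map_sum]
    refine Finset.sum_congr rfl fun j _ => ?_
    simp

lemma counit_tmul (x y : H) :
    Coalgebra.counit (R := k) (x ⊗ₜ[k] y : H ⊗[k] H) =
      Coalgebra.counit (R := k) x * Coalgebra.counit (R := k) y := by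
  show CoalgebraStruct.counit (R := k) (x ⊗ₜ[k] y) = _
  rw [TensorProduct.counit_def]
  simp [mul_comm]

lemma claimB : conv (antipode (R := k) ∘ₗ LinearMap.mul' k H) (LinearMap.mul' k H)
    = (cunit : H ⊗[k] H →ₗ[k] H) := by
  apply TensorProduct.ext'
  intro x y
  rw [conv_repr _ _ _ (Repr.tmul (ℛ k x) (ℛ k y))]
  have : ∑ p ∈ (Repr.tmul (ℛ k x) (ℛ k y)).index,
      (antipode (R := k) ∘ₗ LinearMap.mul' k H) ((Repr.tmul (ℛ k x) (ℛ k y)).left p) *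
        (LinearMap.mul' k H) ((Repr.tmul (ℛ k x) (ℛ k y)).right p)
      = ∑ p ∈ (Repr.mul (ℛ k x) (ℛ k y)).index,
        antipode (R := k) ((Repr.mul (ℛ k x) (ℛ k y)).left p) *
          ((Repr.mul (ℛ k x) (ℛ k y)).right p) := by
    refine Finset.sum_congr rfl fun p _ => ?_
    simp [Repr.tmul, Repr.mul]
  rw [this, sum_antipode_mul_eq_algebraMap_counit (Repr.mul (ℛ k x) (ℛ k y))]
  simp [cunit, counit_tmul, map_mul]
  exact Algebra.commutes _ _

lemma claimA : conv (LinearMap.mul' k H)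
      (LinearMap.mul' k H ∘ₗ TensorProduct.map (antipode (R := k)) (antipode (R := k)) ∘ₗ
        (TensorProduct.comm k H H).toLinearMap)
    = (cunit : H ⊗[k] H →ₗ[k] H) := by
  apply TensorProduct.ext'
  intro x y
  rw [conv_repr _ _ _ (Repr.tmul (ℛ k x) (ℛ k y))]
  have : ∑ p ∈ (Repr.tmul (ℛ k x) (ℛ k y)).index,
      (LinearMap.mul' k H) ((Repr.tmul (ℛ k x) (ℛ k y)).left p) *
        ((LinearMap.mul' k H ∘ₗ TensorProduct.map (antipode (R := k)) (antipode (R := k)) ∘ₗ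
        (TensorProduct.comm k H H).toLinearMap) ((Repr.tmul (ℛ k x) (ℛ k y)).right p))
      = ∑ p ∈ (ℛ k x).index ×ˢ (ℛ k y).index,
          (ℛ k x).left p.1 * (((ℛ k y).left p.2 * antipode (R := k) ((ℛ k y).right p.2)) *
            antipode (R := k) ((ℛ k x).right p.1)) := by
    refine Finset.sum_congr rfl fun p _ => ?_
    simp [Repr.tmul, mul_assoc]
  rw [this, Finset.sum_product]
  have inner : ∀ i ∈ (ℛ k x).index, ∑ j ∈ (ℛ k y).index,
      (ℛ k x).left i * (((ℛ k y).left j * antipode (R := k) ((ℛ k y).right j)) *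
        antipode (R := k) ((ℛ k x).right i))
      = Coalgebra.counit (R := k) y •
          ((ℛ k x).left i * antipode (R := k) ((ℛ k x).right i)) := by
    intro i _
    rw [← Finset.mul_sum, ← Finset.sum_mul, sum_mul_antipode_eq_smul (ℛ k y)]
    simp [smul_mul_assoc, mul_smul_comm]
  rw [Finset.sum_congr rfl inner, ← Finset.smul_sum, sum_mul_antipode_eq_smul (ℛ k x)]
  simp only [cunit, counit_tmul, Algebra.smul_def, map_mul, LinearMap.comp_apply,
    Algebra.linearMap_apply, mul_one, smul_smul]
  exact Algebra.commutes _ _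

lemma antipode_mul (x y : H) :
    antipode (R := k) (x * y) = antipode (R := k) y * antipode (R := k) x := by
  have h : (antipode (R := k) ∘ₗ LinearMap.mul' k H : H ⊗[k] H →ₗ[k] H)
      = LinearMap.mul' k H ∘ₗ TensorProduct.map (antipode (R := k)) (antipode (R := k)) ∘ₗ
        (TensorProduct.comm k H H).toLinearMap := by
    calc antipode (R := k) ∘ₗ LinearMap.mul' k H
        = conv (antipode (R := k) ∘ₗ LinearMap.mul' k H) cunit := (conv_cunit_right _).symm
      _ = conv (antipode (R := k) ∘ₗ LinearMap.mul' k H)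
            (conv (LinearMap.mul' k H)
              (LinearMap.mul' k H ∘ₗ TensorProduct.map (antipode (R := k)) (antipode (R := k)) ∘ₗ
                (TensorProduct.comm k H H).toLinearMap)) := by rw [claimA]
      _ = conv (conv (antipode (R := k) ∘ₗ LinearMap.mul' k H) (LinearMap.mul' k H))
            (LinearMap.mul' k H ∘ₗ TensorProduct.map (antipode (R := k)) (antipode (R := k)) ∘ₗ
              (TensorProduct.comm k H H).toLinearMap) := (conv_assoc _ _ _).symm
      _ = conv cunit (LinearMap.mul' k H ∘ₗ
            TensorProduct.map (antipode (R := k)) (antipode (R := k)) ∘ₗ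
              (TensorProduct.comm k H H).toLinearMap) := by rw [claimB]
      _ = _ := conv_cunit_left _
  have := congrArg (fun f : H ⊗[k] H →ₗ[k] H => f (x ⊗ₜ[k] y)) h
  simpa using this


lemma antipode_one : antipode (R := k) (1 : H) = 1 := by
  have h := mul_antipode_rTensor_comul_apply (R := k) (A := H) (a := 1)
  simpa [Algebra.TensorProduct.one_def] using h

lemma act_one (a : H) : adAct k H (a ⊗ₜ[k] (1 : H)) = a := by
  simp [adAct, Algebra.TensorProduct.one_def, antipode_one]

lemma act_mul (x u v : H) :
    adAct k H (adAct k H (x ⊗ₜ[k] u) ⊗ₜ[k] v) = adAct k H (x ⊗ₜ[k] (u * v)) := by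
  rw [adAct_tmul x u (ℛ k u), adAct_tmul x (u * v) (Repr.mul (ℛ k u) (ℛ k v)),
    sum_tmul, map_sum]
  have h1 : ∀ i ∈ (ℛ k u).index,
      adAct k H ((antipode (R := k) ((ℛ k u).left i) * x * (ℛ k u).right i) ⊗ₜ[k] v)
      = ∑ j ∈ (ℛ k v).index, antipode (R := k) ((ℛ k v).left j) *
          (antipode (R := k) ((ℛ k u).left i) * x * (ℛ k u).right i) * (ℛ k v).right j := by
    intro i _
    rw [adAct_tmul _ v (ℛ k v)]
  rw [Finset.sum_congr rfl h1]
  show _ = ∑ p ∈ (ℛ k u).index ×ˢ (ℛ k v).index, _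
  rw [Finset.sum_product]
  refine Finset.sum_congr rfl fun i _ => Finset.sum_congr rfl fun j _ => ?_
  simp only [Repr.mul, antipode_mul, mul_assoc]

/-- The map `u ⊗ v ↦ (((a ◁ u) ◁ b) ◁ v`. -/
noncomputable def T (a b : H) : H ⊗[k] H →ₗ[k] H :=
  adAct k H ∘ₗ TensorProduct.map
    (adAct k H ∘ₗ (TensorProduct.mk k H H).flip b ∘ₗ adAct k H ∘ₗ TensorProduct.mk k H H a)
    LinearMap.id

lemma T_tmul (a b u v : H) :
    T a b (u ⊗ₜ[k] v) = adAct k H (adAct k H (adAct k H (a ⊗ₜ[k] u) ⊗ₜ[k] b) ⊗ₜ[k] v) := by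
  simp [T]

lemma key (c : H) :
    ∑ j ∈ (ℛ k c).index, ∑ q ∈ (ℛ k ((ℛ k c).right j)).index,
      ((ℛ k c).left j * antipode (R := k) ((ℛ k ((ℛ k c).right j)).left q)) ⊗ₜ[k]
        (ℛ k ((ℛ k c).right j)).right q
    = (1 : H) ⊗ₜ[k] c := by
  have hco := sum_tmul_tmul_eq (ℛ k c) (fun j => ℛ k ((ℛ k c).left j))
    (fun j => ℛ k ((ℛ k c).right j))
  have h2 := congrArg (TensorProduct.map (LinearMap.mul' k H) LinearMap.id ∘ₗ
    (TensorProduct.assoc k H H H).symm.toLinearMap ∘ₗ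
    TensorProduct.map LinearMap.id (TensorProduct.map (antipode (R := k)) LinearMap.id)) hco
  simp only [map_sum, LinearMap.comp_apply, TensorProduct.map_tmul, LinearMap.id_coe, id_eq,
    LinearEquiv.coe_coe, TensorProduct.assoc_symm_tmul, LinearMap.mul'_apply] at h2
  rw [← h2]
  have h3 : ∀ j ∈ (ℛ k c).index,
      ∑ p ∈ (ℛ k ((ℛ k c).left j)).index,
        ((ℛ k ((ℛ k c).left j)).left p * antipode (R := k) ((ℛ k ((ℛ k c).left j)).right p))
          ⊗ₜ[k] (ℛ k c).right j
      = (Coalgebra.counit (R := k) ((ℛ k c).left j) • (1 : H)) ⊗ₜ[k] (ℛ k c).right j := by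
    intro j _
    rw [← TensorProduct.sum_tmul, sum_mul_antipode_eq_smul (ℛ k ((ℛ k c).left j))]
  rw [Finset.sum_congr rfl h3]
  have h4 : ∑ j ∈ (ℛ k c).index,
      (Coalgebra.counit (R := k) ((ℛ k c).left j) • (1 : H)) ⊗ₜ[k] (ℛ k c).right j
      = (1 : H) ⊗ₜ[k] ∑ j ∈ (ℛ k c).index,
          Coalgebra.counit (R := k) ((ℛ k c).left j) • (ℛ k c).right j := by
    rw [tmul_sum]
    exact Finset.sum_congr rfl fun j _ => TensorProduct.smul_tmul _ _ _
  rw [h4, counit_smul_sum]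

end SelfDistribAux


open SelfDistribAux Coalgebra HopfAlgebra

/-- for a Hopf algebra `H`, the right adjoint action
`a ◁ b = S(b₁) a b₂` is self-distributive:
`(a ◁ b) ◁ c = (a ◁ c₁) ◁ (b ◁ c₂)`, expressed as an equality of linear maps
on `(H ⊗ H) ⊗ H`. -/
theorem adjoint_action_self_distributive (H : Type) [Ring H] [HopfAlgebra k H] :
    adAct k H ∘ₗ TensorProduct.map (adAct k H) (LinearMap.id (M := H)) =
      adAct k H ∘ₗ TensorProduct.map (adAct k H) (adAct k H) ∘ₗ
        (TensorProduct.tensorTensorTensorComm k H H H H).toLinearMap ∘ₗ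
        TensorProduct.map (LinearMap.id (M := H ⊗[k] H))
          (Coalgebra.comul (R := k) (A := H)) := by

  apply TensorProduct.ext_threefold
  intro a b c
  simp only [LinearMap.comp_apply, TensorProduct.map_tmul, LinearMap.id_coe, id_eq,
    LinearEquiv.coe_coe]
  rw [← (ℛ k c).eq]
  rw [tmul_sum, map_sum, map_sum, map_sum]
  simp only [tensorTensorTensorComm_tmul, TensorProduct.map_tmul]
  have hterm : ∀ j ∈ (ℛ k c).index,
      adAct k H (adAct k H (a ⊗ₜ[k] (ℛ k c).left j) ⊗ₜ[k]
        adAct k H (b ⊗ₜ[k] (ℛ k c).right j))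
      = ∑ q ∈ (ℛ k ((ℛ k c).right j)).index,
          T a b (((ℛ k c).left j *
            antipode (R := k) ((ℛ k ((ℛ k c).right j)).left q)) ⊗ₜ[k]
              (ℛ k ((ℛ k c).right j)).right q) := by
    intro j _
    rw [adAct_tmul b _ (ℛ k ((ℛ k c).right j)), tmul_sum, map_sum]
    refine Finset.sum_congr rfl fun q _ => ?_
    rw [T_tmul]
    simp only [act_mul, mul_assoc]
  rw [Finset.sum_congr rfl hterm]
  have hsum : ∑ j ∈ (ℛ k c).index, ∑ q ∈ (ℛ k ((ℛ k c).right j)).index,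
      T a b (((ℛ k c).left j *
        antipode (R := k) ((ℛ k ((ℛ k c).right j)).left q)) ⊗ₜ[k]
          (ℛ k ((ℛ k c).right j)).right q)
      = T a b (∑ j ∈ (ℛ k c).index, ∑ q ∈ (ℛ k ((ℛ k c).right j)).index,
          ((ℛ k c).left j *
            antipode (R := k) ((ℛ k ((ℛ k c).right j)).left q)) ⊗ₜ[k]
              (ℛ k ((ℛ k c).right j)).right q) := by
    rw [map_sum]
    exact Finset.sum_congr rfl fun j _ => (map_sum _ _ _).symm
  rw [hsum, key c, T_tmul, act_one]
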